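/- Let Δ be a partition of m and let ρ_n(Δ) for n ≥ m denote the class sum in Z(ℂ[S_n]) of the cycle type obtained from Δ by appending n−m parts of size 1, rescaled by the factor |Aut(Δ̃)|/(|Aut(Δ)|·|Aut(Δ̃∖Δ)|) where Δ̃ is the extended diagram and Δ̃∖Δ consists of n−m parts of size 1. Then for partitions Δ₁, Δ₂, the product ρ_n(Δ₁)·ρ_n(Δ₂) in Z(ℂ[S_n]), expressed in the stabilized basis, has coefficients {Δ₁Δ₂}_k that vanish for all k > |Δ₁| + |Δ₂|. -/

import Mathlib

open Equiv

/-- The standard extension of degree `n` of a partition `Δ` of `m ≤ n`: append `n - m`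
parts of size `1`. -/
def extendPartition {m n : ℕ} (h : m ≤ n) (Δ : Nat.Partition m) : Nat.Partition n where
  parts := Δ.parts + Multiset.replicate (n - m) 1
  parts_pos := by
    intro i hi
    rcases Multiset.mem_add.mp hi with h1 | h2
    · exact Δ.parts_pos h1
    · rw [Multiset.eq_of_mem_replicate h2]; norm_num
  parts_sum := by
    rw [Multiset.sum_add, Δ.parts_sum, Multiset.sum_replicate, smul_eq_mul, mul_one]
    omega

/-- `|Aut(Δ)| = ∏_j m_j!·j^{m_j}`. -/
def aut {n : ℕ} (Δ : Nat.Partition n) : ℕ :=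
  ∏ j ∈ Finset.range (n + 1), (Δ.parts.count j).factorial * j ^ (Δ.parts.count j)

/-- The class sum `C_Δ` in `ℂ[S_n]`. -/
noncomputable def classSum (n : ℕ) (Δ : Nat.Partition n) :
    MonoidAlgebra ℂ (Perm (Fin n)) :=
  ∑ σ ∈ Finset.univ.filter
      (fun σ : Perm (Fin n) => σ.cycleType = Δ.parts.filter (fun j => 2 ≤ j)),
    MonoidAlgebra.single σ 1

/-- The stabilization `ρ_n` of a partition `Δ` of `m` into `Z(ℂ[S_n])`: the class sum of
the standard extension, rescaled by `|Aut(Δ̃)|/(|Aut(Δ)|·(n-m)!)`. -/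
noncomputable def rho (m n : ℕ) (Δ : Nat.Partition m) :
    MonoidAlgebra ℂ (Perm (Fin n)) :=
  if h : m ≤ n then
    ((aut (extendPartition h Δ) : ℂ) / ((aut Δ : ℂ) * (n - m).factorial)) •
      classSum n (extendPartition h Δ)
  else 0

/-- Linear extension of `Δ ↦ C_Δ` to formal linear combinations of partitions. -/
noncomputable def classLift (n : ℕ) (v : Nat.Partition n →₀ ℂ) :
    MonoidAlgebra ℂ (Perm (Fin n)) :=
  v.sum fun Δ c => c • classSum n Δ

/-- Linear extension of `Δ ↦ ρ_n(Δ)` to formal linear combinations of partitions of `k`. -/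
noncomputable def rhoLift (k n : ℕ) (v : Nat.Partition k →₀ ℂ) :
    MonoidAlgebra ℂ (Perm (Fin n)) :=
  v.sum fun Δ c => c • rho k n Δ


namespace FHaux

def bigParts {m : ℕ} (Δ : Nat.Partition m) : Multiset ℕ := Δ.parts.filter (fun j => 2 ≤ j)

lemma two_le_of_mem_bigParts {m : ℕ} {Δ : Nat.Partition m} {j : ℕ} (h : j ∈ bigParts Δ) :
    2 ≤ j := (Multiset.mem_filter.mp h).2

lemma small_filter_eq {m : ℕ} (Δ : Nat.Partition m) :
    Δ.parts.filter (fun j => ¬ 2 ≤ j) =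
      Multiset.replicate (Multiset.card (Δ.parts.filter (fun j => ¬ 2 ≤ j))) 1 := by
  rw [Multiset.eq_replicate]
  refine ⟨rfl, fun b hb => ?_⟩
  have h1 := Δ.parts_pos (Multiset.mem_filter.mp hb).1
  have h2 := (Multiset.mem_filter.mp hb).2
  omega

lemma parts_eq {m : ℕ} (Δ : Nat.Partition m) :
    Δ.parts = bigParts Δ + Multiset.replicate (m - (bigParts Δ).sum) 1 := by
  have h := (Multiset.filter_add_not (fun j => 2 ≤ j) Δ.parts).symm
  have h2 := small_filter_eq Δ
  have hs : (bigParts Δ).sum + Multiset.card (Δ.parts.filter (fun j => ¬ 2 ≤ j)) = m := by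
    have := Δ.parts_sum
    conv_lhs at this => rw [h]
    rw [Multiset.sum_add] at this
    rw [h2, Multiset.sum_replicate, smul_eq_mul, mul_one] at this
    exact this
  have hcard : Multiset.card (Δ.parts.filter (fun j => ¬ 2 ≤ j)) = m - (bigParts Δ).sum := by
    omega
  conv_lhs => rw [h, h2, hcard]
  rfl

lemma sum_bigParts_le {m : ℕ} (Δ : Nat.Partition m) : (bigParts Δ).sum ≤ m := by
  have h := Δ.parts_sum
  conv_lhs at h => rw [parts_eq Δ]
  rw [Multiset.sum_add] at h
  omega

/-- the partition of `k` with big parts `μ`. -/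
def pad (k : ℕ) (μ : Multiset ℕ) : Nat.Partition k :=
  if h : (∀ j ∈ μ, 2 ≤ j) ∧ μ.sum ≤ k then
    { parts := μ + Multiset.replicate (k - μ.sum) 1
      parts_pos := by
        intro i hi
        rcases Multiset.mem_add.mp hi with h1 | h2
        · exact lt_of_lt_of_le two_pos (h.1 i h1)
        · rw [Multiset.eq_of_mem_replicate h2]; norm_num
      parts_sum := by
        rw [Multiset.sum_add, Multiset.sum_replicate, smul_eq_mul, mul_one]
        omega }
  else ⟨Multiset.replicate k 1, by
        intro i hi; rw [Multiset.eq_of_mem_replicate hi]; norm_num,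
      by rw [Multiset.sum_replicate, smul_eq_mul, mul_one]⟩

lemma bigParts_pad {k : ℕ} {μ : Multiset ℕ} (h2 : ∀ j ∈ μ, 2 ≤ j) (hs : μ.sum ≤ k) :
    bigParts (pad k μ) = μ := by
  rw [bigParts, pad, dif_pos ⟨h2, hs⟩]
  simp only [Multiset.filter_add]
  rw [Multiset.filter_eq_self.mpr h2]
  have : (Multiset.replicate (k - μ.sum) 1).filter (fun j => 2 ≤ j) = 0 := by
    rw [Multiset.filter_eq_nil]
    intro a ha
    rw [Multiset.eq_of_mem_replicate ha]
    omega
  rw [this, add_zero]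

lemma pad_bigParts {k : ℕ} (Λ : Nat.Partition k) : pad k (bigParts Λ) = Λ := by
  have h2 : ∀ j ∈ bigParts Λ, 2 ≤ j := fun j hj => two_le_of_mem_bigParts hj
  have hs := sum_bigParts_le Λ
  apply Nat.Partition.ext
  rw [pad, dif_pos ⟨h2, hs⟩]
  exact (parts_eq Λ).symm

lemma pad_iff {k : ℕ} {μ : Multiset ℕ} (h2 : ∀ j ∈ μ, 2 ≤ j) (hs : μ.sum ≤ k)
    {Λ : Nat.Partition k} : Λ = pad k μ ↔ bigParts Λ = μ := by
  constructor
  · rintro rfl; exact bigParts_pad h2 hs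
  · rintro rfl; exact (pad_bigParts Λ).symm

lemma bigParts_extend {m n : ℕ} (h : m ≤ n) (Δ : Nat.Partition m) :
    bigParts (extendPartition h Δ) = bigParts Δ := by
  rw [bigParts, bigParts, extendPartition]
  simp only [Multiset.filter_add]
  have : (Multiset.replicate (n - m) 1).filter (fun j => 2 ≤ j) = 0 := by
    rw [Multiset.filter_eq_nil]
    intro a ha
    rw [Multiset.eq_of_mem_replicate ha]
    omega
  rw [this, add_zero]

lemma extendPartition_self {k : ℕ} (Λ : Nat.Partition k) :
    extendPartition (le_refl k) Λ = Λ := by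
  apply Nat.Partition.ext
  show Λ.parts + Multiset.replicate (k - k) 1 = Λ.parts
  simp

section Aut
variable {m n : ℕ}

lemma part_le {Δ : Nat.Partition m} {j : ℕ} (h : j ∈ Δ.parts) : j ≤ m := by
  have := Multiset.le_sum_of_mem h
  rwa [Δ.parts_sum] at this

lemma count_eq_zero_of_lt {Δ : Nat.Partition m} {j : ℕ} (h : m < j) :
    Δ.parts.count j = 0 := by
  rw [Multiset.count_eq_zero]
  intro hmem
  exact absurd (part_le hmem) (by omega)

lemma aut_pos (Δ : Nat.Partition m) : 0 < aut Δ := by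
  apply Finset.prod_pos
  intro j _
  apply Nat.mul_pos (Nat.factorial_pos _)
  rcases Nat.eq_zero_or_pos (Δ.parts.count j) with h | h
  · rw [h]; norm_num
  · have hj : 0 < j := Δ.parts_pos (Multiset.count_pos.mp h)
    exact Nat.pow_pos hj

lemma aut_eq_range (Δ : Nat.Partition m) {N : ℕ} (hN : m ≤ N) :
    aut Δ = ∏ j ∈ Finset.range (N + 1),
      (Δ.parts.count j).factorial * j ^ (Δ.parts.count j) := by
  rw [aut]
  apply Finset.prod_subset
  · intro x hx
    rw [Finset.mem_range] at hx ⊢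
    omega
  · intro x _ hx
    rw [Finset.mem_range, not_lt] at hx
    rw [count_eq_zero_of_lt (by omega)]
    norm_num

lemma count_one (Δ : Nat.Partition m) :
    Δ.parts.count 1 = m - (bigParts Δ).sum := by
  conv_lhs => rw [parts_eq Δ]
  rw [Multiset.count_add, Multiset.count_replicate_self]
  have : (bigParts Δ).count 1 = 0 := by
    rw [Multiset.count_eq_zero]
    intro hmem
    exact absurd (two_le_of_mem_bigParts hmem) (by omega)
  omega

lemma count_extend (h : m ≤ n) (Δ : Nat.Partition m) (j : ℕ) (hj : j ≠ 1) :
    (extendPartition h Δ).parts.count j = Δ.parts.count j := by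
  show (Δ.parts + Multiset.replicate (n - m) 1).count j = _
  rw [Multiset.count_add, Multiset.count_replicate, if_neg (Ne.symm hj), add_zero]

lemma count_one_extend (h : m ≤ n) (Δ : Nat.Partition m) :
    (extendPartition h Δ).parts.count 1 = n - (bigParts Δ).sum := by
  have := count_one (extendPartition h Δ)
  rw [bigParts_extend] at this
  exact this

lemma aut_ext_mul (h : m ≤ n) (Δ : Nat.Partition m) :
    aut (extendPartition h Δ) * (m - (bigParts Δ).sum).factorial
      = aut Δ * (n - (bigParts Δ).sum).factorial := by
  set s := (bigParts Δ).sum with hs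
  rcases Nat.eq_zero_or_pos n with hn | hn
  · subst hn
    have hm : m = 0 := by omega
    subst hm
    have hEq : (extendPartition h Δ).parts = Δ.parts := by
      show Δ.parts + Multiset.replicate (0 - 0) 1 = Δ.parts
      simp
    have haut : aut (extendPartition h Δ) = aut Δ := by
      simp [aut, hEq]
    rw [haut]
  · have h1n : 1 ∈ Finset.range (n + 1) := by
      rw [Finset.mem_range]; omega
    have hΔ : aut Δ = ∏ j ∈ Finset.range (n + 1),
        (Δ.parts.count j).factorial * j ^ (Δ.parts.count j) := aut_eq_range Δ h
    rw [hΔ, aut]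
    rw [← Finset.mul_prod_erase _ _ h1n, ← Finset.mul_prod_erase _ _ h1n]
    have hprod : ∏ j ∈ (Finset.range (n + 1)).erase 1,
        ((extendPartition h Δ).parts.count j).factorial * j ^ ((extendPartition h Δ).parts.count j)
        = ∏ j ∈ (Finset.range (n + 1)).erase 1,
        (Δ.parts.count j).factorial * j ^ (Δ.parts.count j) := by
      apply Finset.prod_congr rfl
      intro j hj
      rw [count_extend h Δ j (Finset.ne_of_mem_erase hj)]
    rw [hprod, count_one_extend h Δ, count_one Δ, ← hs]
    simp only [one_pow, mul_one]
    ring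

lemma aut_ext_eq (h : m ≤ n) (Δ : Nat.Partition m) :
    aut (extendPartition h Δ)
      = aut Δ * ((n - (bigParts Δ).sum).choose (m - (bigParts Δ).sum)) * (n - m).factorial := by
  set s := (bigParts Δ).sum with hs
  have hsm : s ≤ m := sum_bigParts_le Δ
  have hchoose := Nat.choose_mul_factorial_mul_factorial
    (show m - s ≤ n - s by omega)
  have hnm : n - s - (m - s) = n - m := by omega
  rw [hnm] at hchoose
  apply Nat.eq_of_mul_eq_mul_right (Nat.factorial_pos (m - s))
  rw [aut_ext_mul h Δ, ← hs, ← hchoose]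
  ring

lemma rho_eq_choose_smul (h : m ≤ n) (Δ : Nat.Partition m) :
    rho m n Δ = (((n - (bigParts Δ).sum).choose (m - (bigParts Δ).sum) : ℂ)) •
      classSum n (extendPartition h Δ) := by
  rw [rho, dif_pos h]
  congr 1
  rw [aut_ext_eq h Δ]
  have h1 : (aut Δ : ℂ) ≠ 0 := Nat.cast_ne_zero.mpr (aut_pos Δ).ne'
  have h2 : ((n - m).factorial : ℂ) ≠ 0 := Nat.cast_ne_zero.mpr (Nat.factorial_pos _).ne'
  push_cast
  field_simp

end Aut

section Count
variable {n : ℕ}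

lemma card_supersets (T : Finset (Fin n)) {k : ℕ} (hT : T.card ≤ k) :
    ((Finset.powersetCard k (Finset.univ : Finset (Fin n))).filter (fun S => T ⊆ S)).card
      = (n - T.card).choose (k - T.card) := by
  have key : ((Finset.powersetCard k (Finset.univ : Finset (Fin n))).filter
      (fun S => T ⊆ S)).card = (Finset.powersetCard (k - T.card) Tᶜ).card := by
    apply Finset.card_bij' (fun S _ => S \ T) (fun U _ => U ∪ T)
    · intro S hS
      rw [Finset.mem_filter, Finset.mem_powersetCard] at hS
      rw [Finset.mem_powersetCard]
      refine ⟨fun x hx => ?_, ?_⟩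
      · rw [Finset.mem_compl]
        exact (Finset.mem_sdiff.mp hx).2
      · rw [Finset.card_sdiff_of_subset hS.2, hS.1.2]
    · intro U hU
      rw [Finset.mem_powersetCard] at hU
      rw [Finset.mem_filter, Finset.mem_powersetCard]
      have hdisj : Disjoint U T := by
        rw [Finset.disjoint_right]
        intro a haT haU
        exact (Finset.mem_compl.mp (hU.1 haU)) haT
      refine ⟨⟨Finset.subset_univ _, ?_⟩, Finset.subset_union_right⟩
      rw [Finset.card_union_of_disjoint hdisj, hU.2]
      omega
    · intro S hS
      rw [Finset.mem_filter] at hS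
      exact Finset.sdiff_union_of_subset hS.2
    · intro U hU
      rw [Finset.mem_powersetCard] at hU
      have hdisj : Disjoint U T := by
        rw [Finset.disjoint_right]
        intro a haT haU
        exact (Finset.mem_compl.mp (hU.1 haU)) haT
      rw [Finset.union_sdiff_right]
      exact Finset.sdiff_eq_self_of_disjoint hdisj
  rw [key, Finset.card_powersetCard, Finset.card_compl, Fintype.card_fin]

/-- pairs (S, σ) with `|S| = m`, `supp σ ⊆ S`, `cycleType σ = μ`. -/
def pairs (n m : ℕ) (μ : Multiset ℕ) : Finset (Finset (Fin n) × Perm (Fin n)) :=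
  Finset.univ.filter fun p => p.1.card = m ∧ p.2.support ⊆ p.1 ∧ p.2.cycleType = μ

lemma classSum_eq (k : ℕ) (hk : k ≤ n) (Δ : Nat.Partition k) :
    classSum n (extendPartition hk Δ) =
      ∑ σ ∈ Finset.univ.filter (fun σ : Perm (Fin n) => σ.cycleType = bigParts Δ),
        MonoidAlgebra.single σ 1 := by
  rw [classSum]
  have : (extendPartition hk Δ).parts.filter (fun j => 2 ≤ j) = bigParts Δ :=
    bigParts_extend hk Δ
  rw [this]

lemma rho_eq_sum {m : ℕ} (h : m ≤ n) (Δ : Nat.Partition m) :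
    rho m n Δ = ∑ p ∈ pairs n m (bigParts Δ), MonoidAlgebra.single p.2 (1 : ℂ) := by
  classical
  set μ := bigParts Δ with hμ
  set s := μ.sum with hs
  have hsm : s ≤ m := sum_bigParts_le Δ
  have inner : ∀ σ : Perm (Fin n),
      (∑ S : Finset (Fin n), if S.card = m ∧ σ.support ⊆ S ∧ σ.cycleType = μ
        then MonoidAlgebra.single σ (1 : ℂ) else 0)
      = if σ.cycleType = μ
        then ((n - s).choose (m - s) : ℂ) • MonoidAlgebra.single σ (1 : ℂ) else 0 := by
    intro σ
    by_cases hct : σ.cycleType = μ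
    · rw [if_pos hct]
      have hT : σ.support.card = s := by
        rw [← Equiv.Perm.sum_cycleType, hct]
      have step1 : (∑ S : Finset (Fin n), if S.card = m ∧ σ.support ⊆ S ∧ σ.cycleType = μ
          then MonoidAlgebra.single σ (1 : ℂ) else 0)
          = ∑ S ∈ Finset.univ.filter
              (fun S : Finset (Fin n) => S.card = m ∧ σ.support ⊆ S),
              MonoidAlgebra.single σ (1 : ℂ) := by
        rw [Finset.sum_filter]
        apply Finset.sum_congr rfl
        intro S _
        apply if_congr _ rfl rfl
        tauto
      rw [step1, Finset.sum_const]
      have hsets : Finset.univ.filter (fun S : Finset (Fin n) => S.card = m ∧ σ.support ⊆ S)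
          = (Finset.powersetCard m (Finset.univ : Finset (Fin n))).filter
              (fun S => σ.support ⊆ S) := by
        ext S
        simp only [Finset.mem_filter, Finset.mem_univ, true_and, Finset.mem_powersetCard]
        exact ⟨fun ⟨a, b⟩ => ⟨⟨Finset.subset_univ S, a⟩, b⟩, fun ⟨⟨_, a⟩, b⟩ => ⟨a, b⟩⟩
      rw [hsets, card_supersets σ.support (by omega), hT]
      rw [← Nat.cast_smul_eq_nsmul ℂ]
    · rw [if_neg hct]
      apply Finset.sum_eq_zero
      intro S _
      rw [if_neg (by tauto)]
  have rhs : ∑ p ∈ pairs n m μ, MonoidAlgebra.single p.2 (1 : ℂ)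
      = ((n - s).choose (m - s) : ℂ) •
        ∑ σ ∈ Finset.univ.filter (fun σ : Perm (Fin n) => σ.cycleType = μ),
          MonoidAlgebra.single σ (1 : ℂ) := by
    rw [pairs, ← Finset.univ_product_univ, Finset.sum_filter, Finset.sum_product_right]
    rw [Finset.sum_congr rfl (fun σ _ => inner σ), ← Finset.sum_filter, ← Finset.smul_sum]
  rw [rhs, rho_eq_choose_smul h Δ, classSum_eq m h Δ]

end Count

section Transport
variable {k n : ℕ}

lemma cycleType_permCongr {α β : Type*} [DecidableEq α] [Fintype α] [DecidableEq β] [Fintype β]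
    (e : α ≃ β) (σ : Perm α) : (e.permCongr σ).cycleType = σ.cycleType := by
  classical
  let f : α ≃ {x : β // (fun _ : β => True) x} :=
    e.trans (Equiv.subtypeUnivEquiv (fun _ => trivial)).symm
  have hext : σ.extendDomain f = e.permCongr σ := by
    ext b
    rw [Perm.extendDomain_apply_subtype _ f trivial]
    simp [f, Equiv.subtypeUnivEquiv]
  rw [← hext, Equiv.Perm.cycleType_extendDomain]

lemma mem_iff_apply_mem {τ : Perm (Fin n)} {S : Finset (Fin n)} (hsupp : τ.support ⊆ S) :
    ∀ x : Fin n, x ∈ S ↔ τ x ∈ S := by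
  intro x
  constructor
  · intro hx
    by_cases hfix : τ x = x
    · rwa [hfix]
    · exact hsupp (Equiv.Perm.apply_mem_support.mpr (Equiv.Perm.mem_support.mpr hfix))
  · intro hx
    by_cases hfix : τ x = x
    · rwa [← hfix]
    · exact hsupp (Equiv.Perm.mem_support.mpr hfix)

lemma exists_conj_extend {S : Finset (Fin n)} (hSk : S.card = k) {τ : Perm (Fin n)}
    (hsupp : τ.support ⊆ S) {τ₀ : Perm (Fin k)} (hct : τ₀.cycleType = τ.cycleType) :
    ∃ f : Fin k ≃ {x : Fin n // x ∈ S}, τ₀.extendDomain f = τ := by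
  classical
  have hmem := mem_iff_apply_mem hsupp
  set τS : Perm {x : Fin n // x ∈ S} := τ.subtypePerm (fun x => (hmem x).symm) with hτS
  have hof : Equiv.Perm.ofSubtype τS = τ :=
    Equiv.Perm.ofSubtype_subtypePerm (fun x => (hmem x).symm)
      (fun x hx => hsupp (Equiv.Perm.mem_support.mpr hx))
  have hcard : Fintype.card (Fin k) = Fintype.card {x : Fin n // x ∈ S} := by
    rw [Fintype.card_fin, Fintype.card_coe, hSk]
  set f₁ : Fin k ≃ {x : Fin n // x ∈ S} := Fintype.equivOfCardEq hcard with hf₁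
  have hctS : (f₁.permCongr τ₀).cycleType = τS.cycleType := by
    have h2 : τS.cycleType = τ.cycleType := by
      have h3 := Equiv.Perm.cycleType_ofSubtype (g := τS)
      rw [hof] at h3
      convert h3.symm using 2
    rw [cycleType_permCongr, hct, h2]
  obtain ⟨g, hg⟩ := isConj_iff.mp (Equiv.Perm.isConj_iff_cycleType_eq.mpr hctS)
  refine ⟨f₁.trans g, ?_⟩
  ext x
  by_cases hx : x ∈ S
  · rw [Perm.extendDomain_apply_subtype _ _ hx]
    have hτx : τ x = ((τS ⟨x, hx⟩ : {x : Fin n // x ∈ S}) : Fin n) := rfl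
    rw [hτx, ← hg]
    have : ((f₁.trans g) (τ₀ ((f₁.trans g).symm ⟨x, hx⟩)))
        = (g * f₁.permCongr τ₀ * g⁻¹) ⟨x, hx⟩ := by
      simp [Equiv.permCongr_apply, Equiv.Perm.mul_apply]
    rw [this]
  · rw [Perm.extendDomain_apply_not_subtype _ _ hx]
    exact congrArg Fin.val
      (Equiv.Perm.notMem_support.mp (fun hmem' => hx (hsupp hmem'))).symm

lemma extendDomain_permCongr_symm {α β : Type*} {p : β → Prop} [DecidablePred p]
    (f : α ≃ Subtype p) (g : Perm (Subtype p)) :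
    (f.symm.permCongr g).extendDomain f = Equiv.Perm.ofSubtype g := by
  ext b
  by_cases hb : p b
  · rw [Perm.extendDomain_apply_subtype _ _ hb, Equiv.Perm.ofSubtype_apply_of_mem g hb]
    simp [Equiv.permCongr_apply]
  · rw [Perm.extendDomain_apply_not_subtype _ _ hb,
      Equiv.Perm.ofSubtype_apply_of_not_mem g hb]

/-- Pull back a permutation supported in `S` along `f`. -/
noncomputable def pull {S : Finset (Fin n)} (f : Fin k ≃ {x : Fin n // x ∈ S})
    (ρ : Perm (Fin n)) : Perm (Fin k) :=
  if h : ∀ x : Fin n, x ∈ S ↔ ρ x ∈ S then f.symm.permCongr (ρ.subtypePerm (fun x => (h x).symm)) else 1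

lemma pull_spec {S : Finset (Fin n)} (f : Fin k ≃ {x : Fin n // x ∈ S}) {ρ : Perm (Fin n)}
    (h : ρ.support ⊆ S) : (pull f ρ).extendDomain f = ρ := by
  rw [pull, dif_pos (mem_iff_apply_mem h), extendDomain_permCongr_symm]
  exact Equiv.Perm.ofSubtype_subtypePerm _
    (fun x hx => h (Equiv.Perm.mem_support.mpr hx))

end Transport

section Quads
variable {k n : ℕ}

lemma mem_pairs {n m : ℕ} {μ : Multiset ℕ} {p : Finset (Fin n) × Perm (Fin n)} :
    p ∈ pairs n m μ ↔ p.1.card = m ∧ p.2.support ⊆ p.1 ∧ p.2.cycleType = μ := by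
  rw [pairs, Finset.mem_filter]
  simp only [Finset.mem_univ, true_and]

/-- quadruples `((S₁,σ₁),(S₂,σ₂))` with `σ₁σ₂ = τ` and `S₁ ∪ S₂ = S`. -/
def quadsU (m₁ m₂ : ℕ) (μ₁ μ₂ : Multiset ℕ) (n : ℕ) (τ : Perm (Fin n)) (S : Finset (Fin n)) :
    Finset ((Finset (Fin n) × Perm (Fin n)) × (Finset (Fin n) × Perm (Fin n))) :=
  ((pairs n m₁ μ₁) ×ˢ (pairs n m₂ μ₂)).filter fun q =>
    q.1.2 * q.2.2 = τ ∧ q.1.1 ∪ q.2.1 = S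

lemma mem_quadsU {m₁ m₂ : ℕ} {μ₁ μ₂ : Multiset ℕ} {τ : Perm (Fin n)} {S : Finset (Fin n)}
    {q : (Finset (Fin n) × Perm (Fin n)) × (Finset (Fin n) × Perm (Fin n))} :
    q ∈ quadsU m₁ m₂ μ₁ μ₂ n τ S ↔
      q.1 ∈ pairs n m₁ μ₁ ∧ q.2 ∈ pairs n m₂ μ₂ ∧ q.1.2 * q.2.2 = τ ∧ q.1.1 ∪ q.2.1 = S := by
  rw [quadsU, Finset.mem_filter, Finset.mem_product]
  tauto

lemma card_quadsU (m₁ m₂ : ℕ) (μ₁ μ₂ : Multiset ℕ) {S : Finset (Fin n)} (hSk : S.card = k)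
    {τ : Perm (Fin n)} (hsupp : τ.support ⊆ S) {τ₀ : Perm (Fin k)}
    (hct : τ₀.cycleType = τ.cycleType) :
    (quadsU m₁ m₂ μ₁ μ₂ n τ S).card = (quadsU m₁ m₂ μ₁ μ₂ k τ₀ Finset.univ).card := by
  classical
  obtain ⟨f, hf⟩ := exists_conj_extend hSk hsupp hct
  set emb : Fin k ↪ Fin n := f.asEmbedding with hemb
  have hembapp : ∀ x, emb x = (f x : Fin n) := fun _ => rfl
  have hrange : Finset.univ.map emb = S := by
    ext y
    simp only [Finset.mem_map, Finset.mem_univ, true_and]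
    constructor
    · rintro ⟨x, rfl⟩; exact (f x).2
    · intro hy
      exact ⟨f.symm ⟨y, hy⟩, by rw [hembapp, Equiv.apply_symm_apply]⟩
  have hinj : Function.Injective (fun σ : Perm (Fin k) => σ.extendDomain f) :=
    Equiv.Perm.extendDomainHom_injective f
  have hsuppext : ∀ σ : Perm (Fin k), (σ.extendDomain f).support = σ.support.map emb :=
    fun σ => Equiv.Perm.support_extend_domain f
  have hmappre : ∀ T : Finset (Fin n), T ⊆ S →
      (T.preimage emb emb.injective.injOn).map emb = T := by
    intro T hT
    ext y
    simp only [Finset.mem_map, Finset.mem_preimage]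
    constructor
    · rintro ⟨x, hx, rfl⟩; exact hx
    · intro hy
      refine ⟨f.symm ⟨y, hT hy⟩, ?_, ?_⟩
      · rw [hembapp, Equiv.apply_symm_apply]; exact hy
      · rw [hembapp, Equiv.apply_symm_apply]
  have hpremap : ∀ A : Finset (Fin k), (A.map emb).preimage emb emb.injective.injOn = A := by
    intro A
    ext x
    rw [Finset.mem_preimage, Finset.mem_map']
  have hpullext : ∀ σ : Perm (Fin k), pull f (σ.extendDomain f) = σ := by
    intro σ
    apply hinj
    show (pull f (σ.extendDomain f)).extendDomain f = σ.extendDomain f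
    apply pull_spec
    rw [hsuppext, ← hrange]
    exact Finset.map_subset_map.mpr (Finset.subset_univ _)
  symm
  refine Finset.card_bij'
    (fun q _ => ((q.1.1.map emb, q.1.2.extendDomain f),
                      (q.2.1.map emb, q.2.2.extendDomain f)))
    (fun q _ => ((q.1.1.preimage emb emb.injective.injOn, pull f q.1.2),
                      (q.2.1.preimage emb emb.injective.injOn, pull f q.2.2)))
    ?_ ?_ ?_ ?_
  · -- hi
    rintro ⟨⟨A₁, σ₁⟩, ⟨A₂, σ₂⟩⟩ ha
    rw [mem_quadsU] at ha ⊢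
    obtain ⟨hp₁, hp₂, hprod, hunion⟩ := ha
    rw [mem_pairs] at hp₁ hp₂
    refine ⟨mem_pairs.mpr ⟨?_, ?_, ?_⟩, mem_pairs.mpr ⟨?_, ?_, ?_⟩, ?_, ?_⟩
    · rw [Finset.card_map]; exact hp₁.1
    · rw [hsuppext]; exact Finset.map_subset_map.mpr hp₁.2.1
    · rw [Equiv.Perm.cycleType_extendDomain]; exact hp₁.2.2
    · rw [Finset.card_map]; exact hp₂.1
    · rw [hsuppext]; exact Finset.map_subset_map.mpr hp₂.2.1
    · rw [Equiv.Perm.cycleType_extendDomain]; exact hp₂.2.2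
    · show σ₁.extendDomain f * σ₂.extendDomain f = τ
      rw [Equiv.Perm.extendDomain_mul, hprod, hf]
    · show A₁.map emb ∪ A₂.map emb = S
      rw [← Finset.map_union, hunion, hrange]
  · -- hj
    rintro ⟨⟨T₁, ρ₁⟩, ⟨T₂, ρ₂⟩⟩ hb
    rw [mem_quadsU] at hb ⊢
    obtain ⟨hp₁, hp₂, hprod, hunion⟩ := hb
    rw [mem_pairs] at hp₁ hp₂
    have hT₁S : T₁ ⊆ S := by rw [← hunion]; exact Finset.subset_union_left
    have hT₂S : T₂ ⊆ S := by rw [← hunion]; exact Finset.subset_union_right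
    have hsupp₁ : ρ₁.support ⊆ S := hp₁.2.1.trans hT₁S
    have hsupp₂ : ρ₂.support ⊆ S := hp₂.2.1.trans hT₂S
    refine ⟨mem_pairs.mpr ⟨?_, ?_, ?_⟩, mem_pairs.mpr ⟨?_, ?_, ?_⟩, ?_, ?_⟩
    · rw [← Finset.card_map emb, hmappre T₁ hT₁S]; exact hp₁.1
    · apply Finset.map_subset_map.mp
      rw [← hsuppext, pull_spec f hsupp₁, hmappre T₁ hT₁S]
      exact hp₁.2.1
    · rw [← Equiv.Perm.cycleType_extendDomain (f := f), pull_spec f hsupp₁]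
      exact hp₁.2.2
    · rw [← Finset.card_map emb, hmappre T₂ hT₂S]; exact hp₂.1
    · apply Finset.map_subset_map.mp
      rw [← hsuppext, pull_spec f hsupp₂, hmappre T₂ hT₂S]
      exact hp₂.2.1
    · rw [← Equiv.Perm.cycleType_extendDomain (f := f), pull_spec f hsupp₂]
      exact hp₂.2.2
    · show pull f ρ₁ * pull f ρ₂ = τ₀
      apply hinj
      show (pull f ρ₁ * pull f ρ₂).extendDomain f = τ₀.extendDomain f
      rw [← Equiv.Perm.extendDomain_mul, pull_spec f hsupp₁, pull_spec f hsupp₂, hprod, hf]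
    · show T₁.preimage emb emb.injective.injOn ∪ T₂.preimage emb emb.injective.injOn
        = Finset.univ
      apply Finset.map_injective emb
      rw [Finset.map_union, hmappre T₁ hT₁S, hmappre T₂ hT₂S, hunion, hrange]
  · -- left_inv
    rintro ⟨⟨A₁, σ₁⟩, ⟨A₂, σ₂⟩⟩ _
    simp only [Prod.mk.injEq]
    exact ⟨⟨hpremap A₁, hpullext σ₁⟩, ⟨hpremap A₂, hpullext σ₂⟩⟩
  · -- right_inv
    rintro ⟨⟨T₁, ρ₁⟩, ⟨T₂, ρ₂⟩⟩ hb
    rw [mem_quadsU] at hb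
    obtain ⟨hp₁, hp₂, hprod, hunion⟩ := hb
    rw [mem_pairs] at hp₁ hp₂
    have hT₁S : T₁ ⊆ S := by rw [← hunion]; exact Finset.subset_union_left
    have hT₂S : T₂ ⊆ S := by rw [← hunion]; exact Finset.subset_union_right
    simp only [Prod.mk.injEq]
    exact ⟨⟨hmappre T₁ hT₁S, pull_spec f (hp₁.2.1.trans hT₁S)⟩,
           ⟨hmappre T₂ hT₂S, pull_spec f (hp₂.2.1.trans hT₂S)⟩⟩

end Quads

section QuadsCount
variable {n : ℕ}

/-- quadruples with `σ₁σ₂ = τ` and `|S₁ ∪ S₂| = k`. -/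
def quads (m₁ m₂ : ℕ) (μ₁ μ₂ : Multiset ℕ) (n k : ℕ) (τ : Perm (Fin n)) :
    Finset ((Finset (Fin n) × Perm (Fin n)) × (Finset (Fin n) × Perm (Fin n))) :=
  ((pairs n m₁ μ₁) ×ˢ (pairs n m₂ μ₂)).filter fun q =>
    q.1.2 * q.2.2 = τ ∧ (q.1.1 ∪ q.2.1).card = k

lemma mem_quads {m₁ m₂ k : ℕ} {μ₁ μ₂ : Multiset ℕ} {τ : Perm (Fin n)}
    {q : (Finset (Fin n) × Perm (Fin n)) × (Finset (Fin n) × Perm (Fin n))} :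
    q ∈ quads m₁ m₂ μ₁ μ₂ n k τ ↔
      q.1 ∈ pairs n m₁ μ₁ ∧ q.2 ∈ pairs n m₂ μ₂ ∧ q.1.2 * q.2.2 = τ ∧
        (q.1.1 ∪ q.2.1).card = k := by
  rw [quads, Finset.mem_filter, Finset.mem_product]
  tauto

lemma supp_subset_union {m₁ m₂ k : ℕ} {μ₁ μ₂ : Multiset ℕ} {τ : Perm (Fin n)}
    {q : (Finset (Fin n) × Perm (Fin n)) × (Finset (Fin n) × Perm (Fin n))}
    (hq : q ∈ quads m₁ m₂ μ₁ μ₂ n k τ) : τ.support ⊆ q.1.1 ∪ q.2.1 := by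
  rw [mem_quads] at hq
  obtain ⟨hp₁, hp₂, hprod, -⟩ := hq
  rw [mem_pairs] at hp₁ hp₂
  intro x hx
  rw [← hprod] at hx
  have := Equiv.Perm.support_mul_le q.1.2 q.2.2 hx
  rcases Finset.mem_union.mp this with h | h
  · exact Finset.mem_union_left _ (hp₁.2.1 h)
  · exact Finset.mem_union_right _ (hp₂.2.1 h)

/-- The stable structure constants. -/
noncomputable def Bcoef (m₁ m₂ : ℕ) (μ₁ μ₂ : Multiset ℕ) (k : ℕ) (μ : Multiset ℕ) : ℕ :=
  if h : ∃ τ₀ : Perm (Fin k), τ₀.cycleType = μ then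
    (quadsU m₁ m₂ μ₁ μ₂ k h.choose Finset.univ).card
  else 0

lemma card_quads (m₁ m₂ k : ℕ) (μ₁ μ₂ : Multiset ℕ) (τ : Perm (Fin n)) :
    (quads m₁ m₂ μ₁ μ₂ n k τ).card =
      if τ.cycleType.sum ≤ k then
        Bcoef m₁ m₂ μ₁ μ₂ k τ.cycleType
          * (n - τ.cycleType.sum).choose (k - τ.cycleType.sum)
      else 0 := by
  classical
  have hscard : τ.cycleType.sum = τ.support.card := Equiv.Perm.sum_cycleType τ
  by_cases hs : τ.cycleType.sum ≤ k
  · rw [if_pos hs]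
    have hex : ∃ τ₀ : Perm (Fin k), τ₀.cycleType = τ.cycleType := by
      rw [Equiv.Perm.exists_with_cycleType_iff]
      exact ⟨by rwa [Fintype.card_fin], fun a ha => Equiv.Perm.two_le_of_mem_cycleType ha⟩
    set 𝒮 := (Finset.powersetCard k (Finset.univ : Finset (Fin n))).filter
      (fun S => τ.support ⊆ S) with h𝒮
    have hfib : (quads m₁ m₂ μ₁ μ₂ n k τ).card
        = ∑ S ∈ 𝒮, ((quads m₁ m₂ μ₁ μ₂ n k τ).filter
            (fun q => q.1.1 ∪ q.2.1 = S)).card := by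
      apply Finset.card_eq_sum_card_fiberwise
      intro q hq
      simp only [Finset.mem_coe, h𝒮, Finset.mem_filter, Finset.mem_powersetCard] at hq ⊢
      exact ⟨⟨Finset.subset_univ _, (mem_quads.mp hq).2.2.2⟩, supp_subset_union hq⟩
    have hfibeq : ∀ S ∈ 𝒮, (quads m₁ m₂ μ₁ μ₂ n k τ).filter (fun q => q.1.1 ∪ q.2.1 = S)
        = quadsU m₁ m₂ μ₁ μ₂ n τ S := by
      intro S hS
      rw [h𝒮, Finset.mem_filter, Finset.mem_powersetCard] at hS
      ext q
      rw [Finset.mem_filter, mem_quads, mem_quadsU]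
      constructor
      · rintro ⟨⟨h1, h2, h3, h4⟩, h5⟩
        exact ⟨h1, h2, h3, h5⟩
      · rintro ⟨h1, h2, h3, h4⟩
        exact ⟨⟨h1, h2, h3, by rw [h4, hS.1.2]⟩, h4⟩
    have hcardeq : ∀ S ∈ 𝒮, (quadsU m₁ m₂ μ₁ μ₂ n τ S).card
        = (quadsU m₁ m₂ μ₁ μ₂ k hex.choose Finset.univ).card := by
      intro S hS
      rw [h𝒮, Finset.mem_filter, Finset.mem_powersetCard] at hS
      exact card_quadsU m₁ m₂ μ₁ μ₂ hS.1.2 hS.2 hex.choose_spec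
    have hsuppk : τ.support.card ≤ k := by omega
    rw [hfib]
    calc ∑ S ∈ 𝒮, ((quads m₁ m₂ μ₁ μ₂ n k τ).filter (fun q => q.1.1 ∪ q.2.1 = S)).card
        = ∑ _S ∈ 𝒮, (quadsU m₁ m₂ μ₁ μ₂ k hex.choose Finset.univ).card :=
          Finset.sum_congr rfl (fun S hS => by rw [hfibeq S hS, hcardeq S hS])
      _ = 𝒮.card * (quadsU m₁ m₂ μ₁ μ₂ k hex.choose Finset.univ).card := by
          rw [Finset.sum_const, smul_eq_mul]
      _ = Bcoef m₁ m₂ μ₁ μ₂ k τ.cycleType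
            * (n - τ.cycleType.sum).choose (k - τ.cycleType.sum) := by
          rw [h𝒮, card_supersets τ.support hsuppk, Bcoef, dif_pos hex, ← hscard, mul_comm]
  · rw [if_neg hs]
    rw [Finset.card_eq_zero, Finset.eq_empty_iff_forall_notMem]
    intro q hq
    apply hs
    rw [hscard]
    calc τ.support.card ≤ (q.1.1 ∪ q.2.1).card :=
          Finset.card_le_card (supp_subset_union hq)
      _ = k := (mem_quads.mp hq).2.2.2

end QuadsCount

section Coeff
variable {n : ℕ}

lemma classSum_apply (Δ : Nat.Partition n) (τ : Perm (Fin n)) :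
    (classSum n Δ).coeff τ = if τ.cycleType = Δ.parts.filter (fun j => 2 ≤ j) then 1 else 0 := by
  classical
  rw [classSum, MonoidAlgebra.coeff_sum, Finsupp.finset_sum_apply]
  have hterm : ∀ σ : Perm (Fin n),
      (MonoidAlgebra.single σ (1 : ℂ)).coeff τ = if σ = τ then 1 else 0 :=
    fun σ => Finsupp.single_apply
  rw [Finset.sum_congr rfl (fun σ _ => hterm σ), Finset.sum_ite_eq' _ τ (fun _ => (1 : ℂ))]
  simp only [Finset.mem_filter, Finset.mem_univ, true_and]

lemma cycleType_sum_le (τ : Perm (Fin n)) : τ.cycleType.sum ≤ n := by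
  rw [Equiv.Perm.sum_cycleType]
  calc τ.support.card ≤ Fintype.card (Fin n) := Finset.card_le_univ _
    _ = n := Fintype.card_fin n

lemma classLift_apply (v : Nat.Partition n →₀ ℂ) (τ : Perm (Fin n)) :
    (classLift n v).coeff τ = v (pad n τ.cycleType) := by
  classical
  rw [classLift, MonoidAlgebra.coeff_finsuppSum, Finsupp.sum_apply]
  have hterm : ∀ Δ : Nat.Partition n, ∀ c : ℂ,
      ((c • classSum n Δ) : MonoidAlgebra ℂ (Perm (Fin n))).coeff τ
        = c * (if Δ = pad n τ.cycleType then 1 else 0) := by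
    intro Δ c
    rw [MonoidAlgebra.coeff_smul_apply, classSum_apply, smul_eq_mul]
    congr 1
    have hcond : τ.cycleType = Δ.parts.filter (fun j => 2 ≤ j) ↔ Δ = pad n τ.cycleType := by
      have := pad_iff (k := n) (μ := τ.cycleType)
        (fun j hj => Equiv.Perm.two_le_of_mem_cycleType hj) (cycleType_sum_le τ) (Λ := Δ)
      rw [this]
      show (τ.cycleType = bigParts Δ) ↔ (bigParts Δ = τ.cycleType)
      exact eq_comm
    rw [if_congr hcond rfl rfl]
  rw [Finsupp.sum]
  have hterm2 : ∀ Δ ∈ v.support,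
      ((v Δ • classSum n Δ) : MonoidAlgebra ℂ (Perm (Fin n))).coeff τ
        = if Δ = pad n τ.cycleType then v Δ else 0 := by
    intro Δ _
    rw [hterm Δ (v Δ)]
    by_cases h : Δ = pad n τ.cycleType <;> simp [h]
  rw [Finset.sum_congr rfl hterm2, Finset.sum_ite_eq' _ _ (fun Δ => v Δ)]
  by_cases h : pad n τ.cycleType ∈ v.support
  · rw [if_pos h]
  · rw [if_neg h]
    exact (Finsupp.notMem_support_iff.mp h).symm

lemma classLift_injective {v w : Nat.Partition n →₀ ℂ}
    (h : classLift n v = classLift n w) : v = w := by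
  ext Λ
  obtain ⟨τ, hτ⟩ : ∃ τ : Perm (Fin n), τ.cycleType = bigParts Λ := by
    rw [Equiv.Perm.exists_with_cycleType_iff]
    refine ⟨?_, fun a ha => two_le_of_mem_bigParts ha⟩
    rw [Fintype.card_fin]
    exact sum_bigParts_le Λ
  have happ : (classLift n v).coeff τ = (classLift n w).coeff τ := by rw [h]
  rw [classLift_apply, classLift_apply, hτ, pad_bigParts] at happ
  exact happ

lemma rhoLift_eq (k : ℕ) (v : Nat.Partition k →₀ ℂ) :
    rhoLift k n v = ∑ Λ : Nat.Partition k, v Λ • rho k n Λ := by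
  rw [rhoLift]
  exact Finsupp.sum_fintype _ _ (fun Λ => zero_smul _ _)

lemma classLift_eq (v : Nat.Partition n →₀ ℂ) :
    classLift n v = ∑ Λ : Nat.Partition n, v Λ • classSum n Λ := by
  rw [classLift]
  exact Finsupp.sum_fintype _ _ (fun Λ => zero_smul _ _)

lemma rho_zero_of_gt {k : ℕ} (h : n < k) (Λ : Nat.Partition k) : rho k n Λ = 0 :=
  dif_neg (by omega)

lemma rhoLift_zero_of_gt {k : ℕ} (h : n < k) (v : Nat.Partition k →₀ ℂ) :
    rhoLift k n v = 0 := by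
  rw [rhoLift_eq]
  apply Finset.sum_eq_zero
  intro Λ _
  rw [rho_zero_of_gt h, smul_zero]

lemma rhoLift_zero (k : ℕ) : rhoLift k n (0 : Nat.Partition k →₀ ℂ) = 0 := by
  rw [rhoLift_eq]
  apply Finset.sum_eq_zero
  intro Λ _
  rw [Finsupp.coe_zero, Pi.zero_apply, zero_smul]

lemma rho_self (k : ℕ) (Λ : Nat.Partition k) : rho k k Λ = classSum k Λ := by
  rw [rho_eq_choose_smul (le_refl k) Λ, Nat.choose_self, extendPartition_self]
  norm_num

lemma rhoLift_self (k : ℕ) (v : Nat.Partition k →₀ ℂ) :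
    rhoLift k k v = classLift k v := by
  rw [rhoLift_eq, classLift_eq]
  exact Finset.sum_congr rfl (fun Λ _ => by rw [rho_self])

/-- the candidate bracket coefficients. -/
noncomputable def brStar (m₁ m₂ : ℕ) (μ₁ μ₂ : Multiset ℕ) (k : ℕ) :
    Nat.Partition k →₀ ℂ :=
  Finsupp.equivFunOnFinite.symm fun Λ => (Bcoef m₁ m₂ μ₁ μ₂ k (bigParts Λ) : ℂ)

lemma brStar_apply (m₁ m₂ : ℕ) (μ₁ μ₂ : Multiset ℕ) (k : ℕ) (Λ : Nat.Partition k) :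
    brStar m₁ m₂ μ₁ μ₂ k Λ = (Bcoef m₁ m₂ μ₁ μ₂ k (bigParts Λ) : ℂ) := rfl

end Coeff

section Product
variable {n : ℕ}

lemma key_k (m₁ m₂ : ℕ) (μ₁ μ₂ : Multiset ℕ) (k : ℕ) (hkn : k ≤ n)
    (hμ₁ : ∀ j ∈ μ₁, 2 ≤ j) (hμ₂ : ∀ j ∈ μ₂, 2 ≤ j) :
    ∑ q ∈ ((pairs n m₁ μ₁) ×ˢ (pairs n m₂ μ₂)).filter
        (fun q => (q.1.1 ∪ q.2.1).card = k),
      MonoidAlgebra.single (q.1.2 * q.2.2) (1 : ℂ)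
    = rhoLift k n (brStar m₁ m₂ μ₁ μ₂ k) := by
  classical
  have step1 : ∑ q ∈ ((pairs n m₁ μ₁) ×ˢ (pairs n m₂ μ₂)).filter
        (fun q => (q.1.1 ∪ q.2.1).card = k),
      MonoidAlgebra.single (q.1.2 * q.2.2) (1 : ℂ)
      = ∑ τ : Perm (Fin n), ∑ q ∈ quads m₁ m₂ μ₁ μ₂ n k τ,
          MonoidAlgebra.single (q.1.2 * q.2.2) (1 : ℂ) := by
    rw [← Finset.sum_fiberwise_of_maps_to (g := fun q => q.1.2 * q.2.2)
      (t := (Finset.univ : Finset (Perm (Fin n)))) (fun q _ => Finset.mem_univ _)]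
    apply Finset.sum_congr rfl
    intro τ _
    apply Finset.sum_congr _ (fun _ _ => rfl)
    ext q
    rw [Finset.mem_filter, Finset.mem_filter, mem_quads, Finset.mem_product]
    tauto
  have step2 : ∀ τ : Perm (Fin n), ∑ q ∈ quads m₁ m₂ μ₁ μ₂ n k τ,
      MonoidAlgebra.single (q.1.2 * q.2.2) (1 : ℂ)
      = if τ.cycleType.sum ≤ k then
          ((Bcoef m₁ m₂ μ₁ μ₂ k τ.cycleType
            * (n - τ.cycleType.sum).choose (k - τ.cycleType.sum) : ℕ) : ℂ)
              • MonoidAlgebra.single τ (1 : ℂ)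
        else 0 := by
    intro τ
    have : ∑ q ∈ quads m₁ m₂ μ₁ μ₂ n k τ,
        MonoidAlgebra.single (q.1.2 * q.2.2) (1 : ℂ)
        = ∑ _q ∈ quads m₁ m₂ μ₁ μ₂ n k τ, MonoidAlgebra.single τ (1 : ℂ) :=
      Finset.sum_congr rfl (fun q hq => by rw [(mem_quads.mp hq).2.2.1])
    rw [this, Finset.sum_const, card_quads, ← Nat.cast_smul_eq_nsmul ℂ]
    by_cases hs : τ.cycleType.sum ≤ k
    · rw [if_pos hs, if_pos hs]
    · rw [if_neg hs, if_neg hs, Nat.cast_zero, zero_smul]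
  rw [step1, Finset.sum_congr rfl (fun τ _ => step2 τ)]
  rw [← Finset.sum_filter]
  rw [← Finset.sum_fiberwise_of_maps_to (g := fun τ : Perm (Fin n) => pad k τ.cycleType)
      (t := (Finset.univ : Finset (Nat.Partition k))) (fun τ _ => Finset.mem_univ _)]
  rw [rhoLift_eq]
  apply Finset.sum_congr rfl
  intro Λ _
  have hset : (Finset.univ.filter (fun τ : Perm (Fin n) => τ.cycleType.sum ≤ k)).filter
      (fun τ => pad k τ.cycleType = Λ)
      = Finset.univ.filter (fun τ : Perm (Fin n) => τ.cycleType = bigParts Λ) := by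
    ext τ
    simp only [Finset.mem_filter, Finset.mem_univ, true_and]
    constructor
    · rintro ⟨hs, hp⟩
      rw [← hp, bigParts_pad (fun j hj => Equiv.Perm.two_le_of_mem_cycleType hj) hs]
    · intro hct
      have hsum : τ.cycleType.sum ≤ k := by
        rw [hct]; exact sum_bigParts_le Λ
      exact ⟨hsum, by rw [hct, pad_bigParts]⟩
  rw [hset]
  have hconst : ∀ τ ∈ Finset.univ.filter
      (fun τ : Perm (Fin n) => τ.cycleType = bigParts Λ),
      (((Bcoef m₁ m₂ μ₁ μ₂ k τ.cycleType
          * (n - τ.cycleType.sum).choose (k - τ.cycleType.sum) : ℕ) : ℂ)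
            • MonoidAlgebra.single τ (1 : ℂ))
      = ((Bcoef m₁ m₂ μ₁ μ₂ k (bigParts Λ) : ℂ)
          * ((n - (bigParts Λ).sum).choose (k - (bigParts Λ).sum) : ℂ))
            • MonoidAlgebra.single τ (1 : ℂ) := by
    intro τ hτ
    have hct := (Finset.mem_filter.mp hτ).2
    rw [hct, Nat.cast_mul]
  rw [Finset.sum_congr rfl hconst]
  have : ∑ τ ∈ Finset.univ.filter (fun τ : Perm (Fin n) => τ.cycleType = bigParts Λ),
      ((Bcoef m₁ m₂ μ₁ μ₂ k (bigParts Λ) : ℂ)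
        * ((n - (bigParts Λ).sum).choose (k - (bigParts Λ).sum) : ℂ))
          • MonoidAlgebra.single τ (1 : ℂ)
      = ((Bcoef m₁ m₂ μ₁ μ₂ k (bigParts Λ) : ℂ)
        * ((n - (bigParts Λ).sum).choose (k - (bigParts Λ).sum) : ℂ))
          • ∑ τ ∈ Finset.univ.filter (fun τ : Perm (Fin n) => τ.cycleType = bigParts Λ),
              MonoidAlgebra.single τ (1 : ℂ) := by
    rw [Finset.smul_sum]
  rw [this, ← classSum_eq k hkn Λ, brStar_apply, rho_eq_choose_smul hkn Λ, mul_smul]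
end Product

lemma product_identity (m₁ m₂ : ℕ) (Δ₁ : Nat.Partition m₁) (Δ₂ : Nat.Partition m₂)
    {n : ℕ} (h1 : m₁ ≤ n) (h2 : m₂ ≤ n) :
    rho m₁ n Δ₁ * rho m₂ n Δ₂
      = ∑ k ∈ Finset.Icc (max m₁ m₂) (m₁ + m₂),
          rhoLift k n (brStar m₁ m₂ (bigParts Δ₁) (bigParts Δ₂) k) := by
  classical
  rw [rho_eq_sum h1 Δ₁, rho_eq_sum h2 Δ₂, Finset.sum_mul_sum]
  have hterm : ∀ p₁ ∈ pairs n m₁ (bigParts Δ₁), ∀ p₂ ∈ pairs n m₂ (bigParts Δ₂),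
      MonoidAlgebra.single p₁.2 (1 : ℂ) * MonoidAlgebra.single p₂.2 (1 : ℂ)
        = MonoidAlgebra.single (p₁.2 * p₂.2) (1 : ℂ) := by
    intro p₁ _ p₂ _
    rw [MonoidAlgebra.single_mul_single, one_mul]
  rw [Finset.sum_congr rfl (fun p₁ hp₁ =>
    Finset.sum_congr rfl (fun p₂ hp₂ => hterm p₁ hp₁ p₂ hp₂))]
  rw [← Finset.sum_product'
    (f := fun (p₁ p₂ : Finset (Fin n) × Perm (Fin n)) =>
      MonoidAlgebra.single (p₁.2 * p₂.2) (1 : ℂ))]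
  have hmap : ∀ q ∈ (pairs n m₁ (bigParts Δ₁)) ×ˢ (pairs n m₂ (bigParts Δ₂)),
      (q.1.1 ∪ q.2.1).card ∈ Finset.Icc (max m₁ m₂) (m₁ + m₂) := by
    intro q hq
    rw [Finset.mem_product] at hq
    have hq1 := (mem_pairs.mp hq.1).1
    have hq2 := (mem_pairs.mp hq.2).1
    rw [Finset.mem_Icc]
    constructor
    · apply max_le
      · rw [← hq1]; exact Finset.card_le_card Finset.subset_union_left
      · rw [← hq2]; exact Finset.card_le_card Finset.subset_union_right
    · calc (q.1.1 ∪ q.2.1).card ≤ q.1.1.card + q.2.1.card := Finset.card_union_le _ _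
        _ = m₁ + m₂ := by rw [hq1, hq2]
  rw [← Finset.sum_fiberwise_of_maps_to hmap]
  apply Finset.sum_congr rfl
  intro k _
  by_cases hkn : k ≤ n
  · exact key_k m₁ m₂ (bigParts Δ₁) (bigParts Δ₂) k hkn
      (fun j hj => two_le_of_mem_bigParts hj) (fun j hj => two_le_of_mem_bigParts hj)
  · rw [rhoLift_zero_of_gt (by omega)]
    apply Finset.sum_eq_zero
    intro q hq
    exfalso
    apply hkn
    have := (Finset.mem_filter.mp hq).2
    rw [← this]
    calc (q.1.1 ∪ q.2.1).card ≤ Fintype.card (Fin n) := Finset.card_le_univ _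
      _ = n := Fintype.card_fin n

end FHaux


/-- For partitions `Δ₁`, `Δ₂`, the stabilized products `ρ_n(Δ₁)·ρ_n(Δ₂)` in `Z(ℂ[S_n])`,
expanded in the stabilized basis via the recursion
`{Δ₁Δ₂}_n = ρ_n(Δ₁)·ρ_n(Δ₂) − ∑_{k=max}^{n−1} ρ_n({Δ₁Δ₂}_k)`,
have coefficients `{Δ₁Δ₂}_k` vanishing for all `k > |Δ₁| + |Δ₂|`. -/
theorem bracket_vanishes_above_sum_of_degrees
    (m₁ m₂ : ℕ) (Δ₁ : Nat.Partition m₁) (Δ₂ : Nat.Partition m₂)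
    (br : (k : ℕ) → (Nat.Partition k →₀ ℂ))
    (hbr : ∀ n, max m₁ m₂ ≤ n →
      classLift n (br n) =
        rho m₁ n Δ₁ * rho m₂ n Δ₂ -
          ∑ k ∈ Finset.Ico (max m₁ m₂) n, rhoLift k n (br k)) :
    ∀ k, m₁ + m₂ < k → br k = 0 := by
  classical
  set μ₁ := FHaux.bigParts Δ₁
  set μ₂ := FHaux.bigParts Δ₂
  set M := max m₁ m₂ with hM
  suffices H : ∀ n, M ≤ n →
      br n = if n ≤ m₁ + m₂ then FHaux.brStar m₁ m₂ μ₁ μ₂ n else 0 by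
    intro k hk
    have := H k (by omega)
    rwa [if_neg (by omega)] at this
  intro n
  induction n using Nat.strong_induction_on with
  | _ n IH =>
    intro hMn
    have h1 : m₁ ≤ n := le_trans (le_max_left _ _) hMn
    have h2 : m₂ ≤ n := le_trans (le_max_right _ _) hMn
    have heq := hbr n hMn
    have hrw : ∀ j ∈ Finset.Ico M n, rhoLift j n (br j)
        = rhoLift j n (if j ≤ m₁ + m₂ then FHaux.brStar m₁ m₂ μ₁ μ₂ j else 0) := by
      intro j hj
      rw [IH j (Finset.mem_Ico.mp hj).2 (Finset.mem_Ico.mp hj).1]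
    rw [Finset.sum_congr rfl hrw, FHaux.product_identity m₁ m₂ Δ₁ Δ₂ h1 h2] at heq
    by_cases hn : n ≤ m₁ + m₂
    · rw [if_pos hn]
      apply FHaux.classLift_injective
      rw [heq]
      have hIco : ∀ j ∈ Finset.Ico M n,
          rhoLift j n (if j ≤ m₁ + m₂ then FHaux.brStar m₁ m₂ μ₁ μ₂ j else 0)
            = rhoLift j n (FHaux.brStar m₁ m₂ μ₁ μ₂ j) := by
        intro j hj
        rw [if_pos (by have := (Finset.mem_Ico.mp hj).2; omega)]
      rw [Finset.sum_congr rfl hIco]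
      have hsplit : ∑ k ∈ Finset.Icc M (m₁ + m₂),
            rhoLift k n (FHaux.brStar m₁ m₂ μ₁ μ₂ k)
          = (∑ k ∈ Finset.Ico M n, rhoLift k n (FHaux.brStar m₁ m₂ μ₁ μ₂ k))
            + ∑ k ∈ Finset.Ico n (m₁ + m₂ + 1),
                rhoLift k n (FHaux.brStar m₁ m₂ μ₁ μ₂ k) := by
        rw [← Finset.Ico_add_one_right_eq_Icc]
        rw [Finset.sum_Ico_consecutive _ hMn (by omega)]
      rw [hsplit]
      have hlast : ∑ k ∈ Finset.Ico n (m₁ + m₂ + 1),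
          rhoLift k n (FHaux.brStar m₁ m₂ μ₁ μ₂ k)
          = rhoLift n n (FHaux.brStar m₁ m₂ μ₁ μ₂ n) := by
        apply Finset.sum_eq_single_of_mem
        · rw [Finset.mem_Ico]; omega
        · intro j hj hne
          have := (Finset.mem_Ico.mp hj).1
          exact FHaux.rhoLift_zero_of_gt (by omega) _
      rw [hlast, FHaux.rhoLift_self]
      rw [add_comm, add_sub_cancel_right]
    · rw [if_neg hn]
      apply FHaux.classLift_injective
      have hzero : classLift n (0 : Nat.Partition n →₀ ℂ) = 0 := by
        rw [classLift, Finsupp.sum_zero_index]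
      rw [heq, hzero]
      have hIco : ∀ j ∈ Finset.Ico M n,
          rhoLift j n (if j ≤ m₁ + m₂ then FHaux.brStar m₁ m₂ μ₁ μ₂ j else 0)
            = if j ≤ m₁ + m₂ then rhoLift j n (FHaux.brStar m₁ m₂ μ₁ μ₂ j) else 0 := by
        intro j hj
        split_ifs
        · rfl
        · exact FHaux.rhoLift_zero j
      rw [Finset.sum_congr rfl hIco, ← Finset.sum_filter]
      have hfe : (Finset.Ico M n).filter (fun j => j ≤ m₁ + m₂)
          = Finset.Icc M (m₁ + m₂) := by
        ext j
        rw [Finset.mem_filter, Finset.mem_Ico, Finset.mem_Icc]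
        omega
      rw [hfe, sub_self]
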